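/- Assume ‖U_t‖ ≤ 3‖X‖, μ ≤ (1/27)·‖X‖⁻², and ‖(𝒜*𝒜 − ℐ)(X*Xᵀ − U_t*U_tᵀ)‖ ≤ ‖X‖². Then the next gradient descent iterate satisfies ‖U_{t+1}‖ ≤ 3‖X‖. -/

import Mathlib

open scoped BigOperators ComplexOrder
open MeasureTheory

namespace Tubal

/-- A real tubal tensor of size `m × n × k`. -/
abbrev Tensor (m n k : ℕ) := Fin m → Fin n → Fin k → ℝ

/-- The `j`-th Fourier-domain (frontal) slice of a tubal tensor. -/
noncomputable def slice {m n k : ℕ} (T : Tensor m n k) (j : Fin k) :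
    Matrix (Fin m) (Fin n) ℂ := fun i i' =>
  ∑ j' : Fin k, (T i i' j' : ℂ) *
    Complex.exp (-(2 * (Real.pi : ℂ) * Complex.I * ((j : ℕ) : ℂ) * ((j' : ℕ) : ℂ)) / ((k : ℕ) : ℂ))

/-- The tubal product (t-product) of two tubal tensors. -/
def tprod {m q n k : ℕ} (A : Tensor m q k) (B : Tensor q n k) : Tensor m n k :=
  fun i i' l => ∑ p : Fin q, ∑ l' : Fin k, A i p l' * B p i' (l - l')

/-- The tubal transpose. -/
def ttr {m n k : ℕ} (T : Tensor m n k) : Tensor n m k := fun i i' j => T i' i (-j)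

/-- The identity tubal tensor. -/
def tId (n k : ℕ) : Tensor n n k := fun i i' j => if i = i' ∧ (j : ℕ) = 0 then 1 else 0

/-- Frobenius norm of a tubal tensor. -/
noncomputable def frobNorm {m n k : ℕ} (T : Tensor m n k) : ℝ :=
  Real.sqrt (∑ i, ∑ i', ∑ j, (T i i' j) ^ 2)

/-- Entrywise inner product of tubal tensors. -/
def tinner {m n k : ℕ} (T S : Tensor m n k) : ℝ := ∑ i, ∑ i', ∑ j, T i i' j * S i i' j

/-- ℓ₂-operator norm of a complex matrix. -/
noncomputable def matOpNorm {m n : ℕ} (M : Matrix (Fin m) (Fin n) ℂ) : ℝ :=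
  ‖LinearMap.toContinuousLinearMap (Matrix.toEuclideanLin M)‖

/-- Tensor spectral norm: max over Fourier slices of operator norm. -/
noncomputable def specNorm {m n k : ℕ} (T : Tensor m n k) : ℝ :=
  ⨆ j : Fin k, matOpNorm (slice T j)

/-- `i`-th largest singular value (0-based index into `Fin n`). -/
noncomputable def svalIdx {m n : ℕ} (M : Matrix (Fin m) (Fin n) ℂ) (i : Fin n) : ℝ :=
  Real.sqrt (((Matrix.isHermitian_conjTranspose_mul_self M).eigenvalues)
    ((Tuple.sort ((Matrix.isHermitian_conjTranspose_mul_self M).eigenvalues)) i.rev))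

/-- `i`-th largest singular value of a matrix, `1`-based (σ₁ is the largest). -/
noncomputable def sval {m n : ℕ} (M : Matrix (Fin m) (Fin n) ℂ) (i : ℕ) : ℝ :=
  if h : i - 1 < n then svalIdx M ⟨i - 1, h⟩ else 0

/-- Smallest singular value of an `m × n` matrix. -/
noncomputable def sminMat {m n : ℕ} (M : Matrix (Fin m) (Fin n) ℂ) : ℝ :=
  sval M (min m n)

/-- σ_min of the block-diagonal Fourier representation of a tensor:
the minimum over slices of the smallest singular value. -/
noncomputable def tSMin {m n k : ℕ} (T : Tensor m n k) : ℝ :=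
  ⨅ j : Fin k, sminMat (slice T j)

/-- The tubal rank: maximum over slices of the matrix rank. -/
noncomputable def trank {m n k : ℕ} (T : Tensor m n k) : ℕ :=
  Finset.univ.sup fun j : Fin k => (slice T j).rank

/-- Condition number `κ(T) = σ₁(T̄)/σ_{min{m,n}k}(T̄)`. -/
noncomputable def cond {m n k : ℕ} (T : Tensor m n k) : ℝ := specNorm T / tSMin T

/-- Tensor nuclear norm `(1/k)·Σ_{j,i} σ_i(T̄^{(j)})`. -/
noncomputable def nucNorm {m n k : ℕ} (T : Tensor m n k) : ℝ :=
  (1 / (k : ℝ)) * ∑ j : Fin k, ∑ i : Fin n, svalIdx (slice T j) i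

/-- The linear measurement map `𝒜`. -/
def Ameas {n k m : ℕ} (A : Fin m → Tensor n n k) (Z : Tensor n n k) : Fin m → ℝ :=
  fun i => tinner (A i) Z

/-- `𝒜*𝒜`. -/
def AtA {n k m : ℕ} (A : Fin m → Tensor n n k) (Z : Tensor n n k) : Tensor n n k :=
  fun p q l => ∑ i, tinner (A i) Z * A i p q l

/-- Restricted isometry property of rank `r` with constant `δ`. -/
def RIP {n k m : ℕ} (A : Fin m → Tensor n n k) (r : ℕ) (δ : ℝ) : Prop :=
  ∀ Z : Tensor n n k, ttr Z = Z → trank Z ≤ r →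
    (1 - δ) * frobNorm Z ^ 2 ≤ ∑ i, (tinner (A i) Z) ^ 2 ∧
      ∑ i, (tinner (A i) Z) ^ 2 ≤ (1 + δ) * frobNorm Z ^ 2

/-- Spectral-to-nuclear restricted isometry property. -/
def S2NRIP {n k m : ℕ} (A : Fin m → Tensor n n k) (δ : ℝ) : Prop :=
  ∀ Z : Tensor n n k, ttr Z = Z → specNorm (Z - AtA A Z) ≤ δ * nucNorm Z

/-- One gradient-descent step `U ↦ [𝕀 + μ(𝒜*𝒜)(X*Xᵀ − U*Uᵀ)]*U`. -/
noncomputable def gdStep {n r R k m : ℕ} (A : Fin m → Tensor n n k) (X : Tensor n r k)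
    (μ : ℝ) (U : Tensor n R k) : Tensor n R k :=
  tprod (tId n k + μ • AtA A (tprod X (ttr X) - tprod U (ttr U))) U

/-- Gradient descent iterates. -/
noncomputable def gdIter {n r R k m : ℕ} (A : Fin m → Tensor n n k) (X : Tensor n r k)
    (μ : ℝ) (U0 : Tensor n R k) : ℕ → Tensor n R k
  | 0 => U0
  | t + 1 => gdStep A X μ (gdIter A X μ U0 t)

/-- `t`-fold tubal power. -/
noncomputable def tpow {n k : ℕ} (T : Tensor n n k) : ℕ → Tensor n n k
  | 0 => tId n k
  | t + 1 => tprod T (tpow T t)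

/-- Block-diagonal Fourier-domain matrix representation of a tensor. -/
noncomputable def bdiag {m n k : ℕ} (T : Tensor m n k) :
    Matrix (Fin k × Fin m) (Fin k × Fin n) ℂ :=
  fun p q => if p.1 = q.1 then slice T p.1 p.2 q.2 else 0

/-- ℓ₂ norm of a complex vector. -/
noncomputable def l2norm {ι : Type*} [Fintype ι] (w : ι → ℂ) : ℝ :=
  Real.sqrt (∑ i, Complex.normSq (w i))

/-- i.i.d. Gaussian measure on tubal tensors, each entry `N(0, v)`. -/
noncomputable def gaussianTensor (n R k : ℕ) (v : NNReal) : Measure (Tensor n R k) :=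
  Measure.pi fun _ => Measure.pi fun _ => Measure.pi fun _ =>
    ProbabilityTheory.gaussianReal 0 v

/-- The first `r` tensor columns. -/
def cols {a p k : ℕ} (T : Tensor a p k) (r : ℕ) (h : r ≤ p) : Tensor a r k :=
  fun i s j => T i (Fin.castLE h s) j

/-- `W` is orthonormal: `Wᵀ*W = 𝕀`. -/
def ONB {p q k : ℕ} (W : Tensor p q k) : Prop := tprod (ttr W) W = tId q k

/-- `Q` is an orthogonal tubal tensor. -/
def Orthogonal {p k : ℕ} (Q : Tensor p p k) : Prop :=
  tprod Q (ttr Q) = tId p k ∧ tprod (ttr Q) Q = tId p k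

/-- `V` is an orthonormal basis for the tensor-column space of `Y`. -/
def IsColBasis {a b q k : ℕ} (Y : Tensor a b k) (V : Tensor a q k) : Prop :=
  ONB V ∧ tprod V (tprod (ttr V) Y) = Y

/-- `Vp` is an orthonormal complement of the orthonormal `V`. -/
def IsOrthCompl {a q q' k : ℕ} (V : Tensor a q k) (Vp : Tensor a q' k) : Prop :=
  ONB Vp ∧ tprod (ttr Vp) V = 0 ∧
    tprod V (ttr V) + tprod Vp (ttr Vp) = tId a k

/-- `S` is an f-diagonal tensor with nonnegative, nonincreasing (real) diagonal in
every Fourier slice: the middle factor of a t-SVD. -/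
def IsFDiagSorted {p q k : ℕ} (S : Tensor p q k) : Prop :=
  (∀ j : Fin k, ∀ i : Fin p, ∀ i' : Fin q, (i : ℕ) ≠ (i' : ℕ) → slice S j i i' = 0) ∧
  (∀ j : Fin k, ∀ i : Fin p, ∀ i' : Fin q, (i : ℕ) = (i' : ℕ) →
    (slice S j i i').im = 0 ∧ 0 ≤ (slice S j i i').re) ∧
  (∀ j : Fin k, ∀ i₁ i₂ : Fin p, ∀ i₁' i₂' : Fin q, (i₁ : ℕ) = (i₁' : ℕ) →
    (i₂ : ℕ) = (i₂' : ℕ) → (i₁ : ℕ) ≤ (i₂ : ℕ) →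
    (slice S j i₂ i₂').re ≤ (slice S j i₁ i₁').re)

/-- `(V, S, W)` is a t-SVD of `T`. -/
def IsTSVD {p q k : ℕ} (T : Tensor p q k) (V : Tensor p p k) (S : Tensor p q k)
    (W : Tensor q q k) : Prop :=
  Orthogonal V ∧ Orthogonal W ∧ IsFDiagSorted S ∧ T = tprod V (tprod S (ttr W))



-- ===== auxiliary lemmas =====

section Aux
open scoped Matrix.Norms.L2Operator

noncomputable def cexp (k : ℕ) (j : Fin k) (v : ℕ) : ℂ :=
  Complex.exp (-(2 * (Real.pi : ℂ) * Complex.I * ((j : ℕ) : ℂ) * (v : ℂ)) / ((k : ℕ) : ℂ))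

noncomputable def ch {k : ℕ} (j l : Fin k) : ℂ := cexp k j (l : ℕ)

lemma slice_eq {m n k : ℕ} (T : Tensor m n k) (j : Fin k) (i : Fin m) (i' : Fin n) :
    slice T j i i' = ∑ l : Fin k, (T i i' l : ℂ) * ch j l := rfl

lemma cexp_add {k : ℕ} (j : Fin k) (v w : ℕ) : cexp k j (v + w) = cexp k j v * cexp k j w := by
  unfold cexp
  rw [← Complex.exp_add]
  congr 1
  push_cast
  ring

lemma cexp_mul_k {k : ℕ} (j : Fin k) (q : ℕ) : cexp k j (k * q) = 1 := by
  have hk : 0 < k := j.pos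
  have hk' : ((k : ℕ) : ℂ) ≠ 0 := Nat.cast_ne_zero.mpr hk.ne'
  unfold cexp
  have h : -(2 * (Real.pi : ℂ) * Complex.I * ((j : ℕ) : ℂ) * ((k * q : ℕ) : ℂ)) / ((k : ℕ) : ℂ)
      = ((-((j : ℕ) * q : ℕ) : ℤ) : ℂ) * (2 * (Real.pi : ℂ) * Complex.I) := by
    push_cast
    field_simp
  rw [h, Complex.exp_int_mul_two_pi_mul_I]

lemma ch_add {k : ℕ} (j a b : Fin k) : ch j (a + b) = ch j a * ch j b := by
  have hval : (a : ℕ) + (b : ℕ) = ((a + b : Fin k) : ℕ) + k * (((a : ℕ) + (b : ℕ)) / k) := by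
    rw [Fin.val_add]; exact (Nat.mod_add_div _ _).symm
  have := cexp_add j ((a + b : Fin k) : ℕ) (k * (((a : ℕ) + (b : ℕ)) / k))
  rw [cexp_mul_k, mul_one] at this
  unfold ch
  rw [← cexp_add, hval, this]

lemma cexp_zero {k : ℕ} (j : Fin k) : cexp k j 0 = 1 := by
  unfold cexp; simp

lemma ch_neg_mul {k : ℕ} (j l : Fin k) : ch j (-l) * ch j l = 1 := by
  haveI : NeZero k := ⟨j.pos.ne'⟩
  rw [← ch_add, neg_add_cancel]
  show cexp k j ((0 : Fin k) : ℕ) = 1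
  rw [Fin.val_zero, cexp_zero]

lemma ch_ne_zero {k : ℕ} (j l : Fin k) : ch j l ≠ 0 := Complex.exp_ne_zero _

lemma conj_ch {k : ℕ} (j l : Fin k) : (starRingEnd ℂ) (ch j l) = ch j (-l) := by
  have habs : ‖ch j l‖ = 1 := by
    unfold ch cexp
    have : -(2 * (Real.pi : ℂ) * Complex.I * ((j : ℕ) : ℂ) * ((l : ℕ) : ℂ)) / ((k : ℕ) : ℂ)
        = ((-(2 * Real.pi * (j : ℕ) * (l : ℕ)) / (k : ℕ) : ℝ) : ℂ) * Complex.I := by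
      push_cast; ring
    rw [this, Complex.norm_exp_ofReal_mul_I]
  have h1 : (starRingEnd ℂ) (ch j l) * ch j l = 1 := by
    rw [mul_comm, Complex.mul_conj, Complex.normSq_eq_norm_sq, habs]
    norm_num
  have h2 := ch_neg_mul j l
  calc (starRingEnd ℂ) (ch j l) = (starRingEnd ℂ) (ch j l) * (ch j (-l) * ch j l) := by
        rw [h2, mul_one]
    _ = ch j (-l) * ((starRingEnd ℂ) (ch j l) * ch j l) := by ring
    _ = ch j (-l) := by rw [h1, mul_one]

lemma slice_add {m n k : ℕ} (T S : Tensor m n k) (j : Fin k) :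
    slice (T + S) j = slice T j + slice S j := by
  ext i i'
  simp only [slice_eq, Matrix.add_apply, Pi.add_apply]
  rw [← Finset.sum_add_distrib]
  congr 1; ext l; push_cast; ring

lemma slice_sub {m n k : ℕ} (T S : Tensor m n k) (j : Fin k) :
    slice (T - S) j = slice T j - slice S j := by
  ext i i'
  simp only [slice_eq, Matrix.sub_apply, Pi.sub_apply]
  rw [← Finset.sum_sub_distrib]
  congr 1; ext l; push_cast; ring

lemma slice_smul {m n k : ℕ} (μ : ℝ) (T : Tensor m n k) (j : Fin k) :
    slice (μ • T) j = (μ : ℂ) • slice T j := by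
  ext i i'
  simp only [slice_eq, Matrix.smul_apply, Pi.smul_apply, smul_eq_mul, Finset.mul_sum]
  congr 1; ext l; push_cast; ring

lemma slice_tId {n k : ℕ} (j : Fin k) : slice (tId n k) j = 1 := by
  haveI : NeZero k := ⟨j.pos.ne'⟩
  ext i i'
  simp only [slice_eq, tId]
  rcases eq_or_ne i i' with h | h
  · subst h
    rw [Matrix.one_apply_eq]
    have : ∀ l : Fin k, ((if i = i ∧ (l : ℕ) = 0 then (1:ℝ) else 0 : ℝ) : ℂ) * ch j l
        = if l = 0 then ch j l else 0 := by
      intro l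
      rcases eq_or_ne l 0 with hl | hl
      · subst hl; simp [Fin.val_zero]
      · have : (l : ℕ) ≠ 0 := fun h0 => hl (Fin.ext (by simp [h0]))
        simp [this, hl]
    rw [Finset.sum_congr rfl fun l _ => this l, Finset.sum_ite_eq' Finset.univ 0 fun l => ch j l]
    simp only [Finset.mem_univ, if_true]
    show cexp k j ((0 : Fin k) : ℕ) = 1
    rw [Fin.val_zero, cexp_zero]
  · rw [Matrix.one_apply_ne h]
    apply Finset.sum_eq_zero
    intro l _
    simp [h]

lemma slice_tprod {m q n k : ℕ} (A : Tensor m q k) (B : Tensor q n k) (j : Fin k) :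
    slice (tprod A B) j = slice A j * slice B j := by
  haveI : NeZero k := ⟨j.pos.ne'⟩
  ext i i'
  simp only [slice_eq, Matrix.mul_apply, tprod]
  push_cast
  calc ∑ l : Fin k, (∑ p : Fin q, ∑ l' : Fin k, (A i p l' : ℂ) * (B p i' (l - l') : ℂ)) * ch j l
      = ∑ l : Fin k, ∑ p : Fin q, ∑ l' : Fin k, (A i p l' : ℂ) * (B p i' (l - l') : ℂ) * ch j l := by
        simp only [Finset.sum_mul]
    _ = ∑ p : Fin q, ∑ l : Fin k, ∑ l' : Fin k, (A i p l' : ℂ) * (B p i' (l - l') : ℂ) * ch j l :=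
        Finset.sum_comm
    _ = ∑ p : Fin q, ∑ l' : Fin k, ∑ l : Fin k, (A i p l' : ℂ) * (B p i' (l - l') : ℂ) * ch j l :=
        Finset.sum_congr rfl fun p _ => Finset.sum_comm
    _ = ∑ p : Fin q, ∑ l' : Fin k, ∑ d : Fin k,
          ((A i p l' : ℂ) * ch j l') * ((B p i' d : ℂ) * ch j d) := by
        refine Finset.sum_congr rfl fun p _ => Finset.sum_congr rfl fun l' _ => ?_
        refine (Fintype.sum_equiv (Equiv.addLeft l')
          (fun d => ((A i p l' : ℂ) * ch j l') * ((B p i' d : ℂ) * ch j d))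
          (fun l => (A i p l' : ℂ) * (B p i' (l - l') : ℂ) * ch j l) fun d => ?_).symm
        simp only [Equiv.coe_addLeft]
        rw [add_sub_cancel_left, ch_add]
        ring
    _ = ∑ p : Fin q, (∑ l' : Fin k, (A i p l' : ℂ) * ch j l') *
          (∑ d : Fin k, (B p i' d : ℂ) * ch j d) := by
        refine Finset.sum_congr rfl fun p _ => ?_
        rw [Finset.sum_mul_sum]

lemma slice_ttr {m n k : ℕ} (T : Tensor m n k) (j : Fin k) :
    slice (ttr T) j = (slice T j).conjTranspose := by
  haveI : NeZero k := ⟨j.pos.ne'⟩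
  ext i i'
  simp only [slice_eq, Matrix.conjTranspose_apply, ttr, Complex.star_def, map_sum, map_mul,
    Complex.conj_ofReal, conj_ch]
  refine Fintype.sum_equiv (Equiv.neg (Fin k))
    (fun l => ((T i' i (-l) : ℝ) : ℂ) * ch j l)
    (fun l => ((T i' i l : ℝ) : ℂ) * ch j (-l)) fun l => ?_
  simp [neg_neg]

lemma matOpNorm_eq {m n : ℕ} (M : Matrix (Fin m) (Fin n) ℂ) : matOpNorm M = ‖M‖ :=
  (Matrix.l2_opNorm_def M).symm

lemma toEuclideanLin_mul_apply {m n p : ℕ} (M : Matrix (Fin m) (Fin n) ℂ)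
    (N : Matrix (Fin n) (Fin p) ℂ) (x : EuclideanSpace ℂ (Fin p)) :
    Matrix.toEuclideanLin (M * N) x = Matrix.toEuclideanLin M (Matrix.toEuclideanLin N x) := by
  simp [Matrix.toEuclideanLin_apply, Matrix.mulVec_mulVec]

lemma norm_toEuclideanLin_apply_le {m n : ℕ} (M : Matrix (Fin m) (Fin n) ℂ)
    (x : EuclideanSpace ℂ (Fin n)) : ‖Matrix.toEuclideanLin M x‖ ≤ ‖M‖ * ‖x‖ := by
  rw [Matrix.l2_opNorm_def]
  exact (LinearMap.toContinuousLinearMap (Matrix.toEuclideanLin M)).le_opNorm x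

-- scalar certificate lemma
lemma scalar_aux (a μ v w : ℝ) (ha : 0 < a) (hμ : 0 < μ) (h27 : μ * a ^ 2 ≤ 1 / 27)
    (hw : 0 ≤ w) (hv : 0 ≤ v) (hvw : v ≤ 9 * a ^ 2 * w) :
    v * w ≤ (3 * a - 6 * μ * a ^ 3) ^ 2 * w ^ 2 + (5 / 3) * μ * v ^ 2 := by
  have h1 : 0 ≤ (3 * a - 6 * μ * a ^ 3) ^ 2 * (9 * a ^ 2 * w - v) * v :=
    mul_nonneg (mul_nonneg (sq_nonneg _) (sub_nonneg.2 hvw)) hv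
  have h2 : 0 ≤ (3 * a * (3 * a - 6 * μ * a ^ 3) ^ 2 * w - 3 * a * v) ^ 2 := sq_nonneg _
  have h3 : 0 ≤ 9 * μ * a ^ 4 * (11 - 56 * (μ * a ^ 2) + 60 * (μ * a ^ 2) ^ 2) * v ^ 2 := by
    have h : (0:ℝ) ≤ 11 - 56 * (μ * a ^ 2) + 60 * (μ * a ^ 2) ^ 2 := by nlinarith
    positivity
  have hβpos : 0 < 3 * a - 6 * μ * a ^ 3 := by nlinarith
  have h4 : 0 < 9 * a ^ 2 * (3 * a - 6 * μ * a ^ 3) ^ 2 := by positivity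
  have key : 9 * a ^ 2 * (3 * a - 6 * μ * a ^ 3) ^ 2 * 0 ≤
      9 * a ^ 2 * (3 * a - 6 * μ * a ^ 3) ^ 2 *
        ((3 * a - 6 * μ * a ^ 3) ^ 2 * w ^ 2 - v * w + (5 / 3) * μ * v ^ 2) := by
    nlinarith [h1, h2, h3]
  have hP : (0:ℝ) ≤ (3 * a - 6 * μ * a ^ 3) ^ 2 * w ^ 2 - v * w + (5 / 3) * μ * v ^ 2 :=
    (mul_le_mul_iff_right₀ h4).mp key
  linarith

lemma scalar_key (a μ u s n0 : ℝ) (ha : 0 < a) (hμ : 0 < μ) (h27 : μ * a ^ 2 ≤ 1 / 27)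
    (hn0 : 0 ≤ n0) (hu : 0 ≤ u) (hs : 0 ≤ s) (h1 : u ≤ 3 * a * n0) (h2 : u ^ 2 ≤ n0 * s) :
    u ^ 2 - 2 * μ * s ^ 2 + μ ^ 2 * (3 * a * s) ^ 2 ≤ ((3 * a - 6 * μ * a ^ 3) * n0) ^ 2 := by
  have h9 : μ ^ 2 * (3 * a * s) ^ 2 ≤ (1 / 3) * μ * s ^ 2 := by
    nlinarith [mul_nonneg (mul_nonneg hμ.le (sq_nonneg s))
      (by linarith : (0:ℝ) ≤ 1 / 3 - 9 * (μ * a ^ 2))]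
  rcases eq_or_lt_of_le hn0 with h0 | h0
  · have hu0 : u = 0 := le_antisymm (by nlinarith) hu
    have : ((3 * a - 6 * μ * a ^ 3) * n0) ^ 2 = 0 := by rw [← h0]; ring
    rw [this, hu0]
    nlinarith [mul_nonneg hμ.le (sq_nonneg s)]
  · have hvw : u ^ 2 ≤ 9 * a ^ 2 * n0 ^ 2 := by nlinarith
    have hs2 : u ^ 2 * u ^ 2 ≤ (n0 * s) * (n0 * s) :=
      mul_self_le_mul_self (sq_nonneg u) h2
    have main := scalar_aux a μ (u ^ 2) (n0 ^ 2) ha hμ h27 (sq_nonneg n0) (sq_nonneg u) hvw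
    have hfin : u ^ 2 - (5 / 3) * μ * s ^ 2 ≤ ((3 * a - 6 * μ * a ^ 3) * n0) ^ 2 := by
      nlinarith [mul_nonneg hμ.le (by nlinarith : (0:ℝ) ≤ n0 ^ 2 * s ^ 2 - u ^ 2 * u ^ 2),
        mul_pos h0 h0]
    linarith

lemma key_norm {n R : ℕ} (μ a : ℝ) (hμ : 0 < μ) (ha : 0 < a) (h27 : μ * a ^ 2 ≤ 1 / 27)
    (Ub : Matrix (Fin n) (Fin R) ℂ) (hU : ‖Ub‖ ≤ 3 * a) :
    ‖Ub - (μ : ℂ) • (Ub * Ub.conjTranspose * Ub)‖ ≤ 3 * a - 6 * μ * a ^ 3 := by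
  have hβ : (0:ℝ) ≤ 3 * a - 6 * μ * a ^ 3 := by nlinarith
  rw [Matrix.l2_opNorm_def]
  apply ContinuousLinearMap.opNorm_le_bound _ hβ
  intro x
  have happ : (Matrix.toEuclideanLin ≪≫ₗ LinearMap.toContinuousLinearMap)
      (Ub - (μ : ℂ) • (Ub * Ub.conjTranspose * Ub)) x =
      Matrix.toEuclideanLin Ub x - (μ : ℂ) • (Matrix.toEuclideanLin Ub
        (Matrix.toEuclideanLin Ub.conjTranspose (Matrix.toEuclideanLin Ub x))) := by
    simp only [LinearEquiv.trans_apply, map_sub, _root_.map_smul, ContinuousLinearMap.sub_apply,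
      ContinuousLinearMap.smul_apply, LinearMap.coe_toContinuousLinearMap',
      LinearMap.sub_apply, LinearMap.smul_apply, toEuclideanLin_mul_apply]
  rw [happ]
  set y : EuclideanSpace ℂ (Fin n) := Matrix.toEuclideanLin Ub x with hy
  set z : EuclideanSpace ℂ (Fin R) := Matrix.toEuclideanLin Ub.conjTranspose y with hz
  set Lz : EuclideanSpace ℂ (Fin n) := Matrix.toEuclideanLin Ub z with hLz
  have hzadj : z = LinearMap.adjoint (Matrix.toEuclideanLin Ub) y := by
    rw [hz, Matrix.toEuclideanLin_conjTranspose_eq_adjoint]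
  have hinner : (inner ℂ y Lz : ℂ) = inner ℂ z z := by
    rw [hLz, ← LinearMap.adjoint_inner_left (Matrix.toEuclideanLin Ub) z y, ← hzadj]
  have e1 : (inner ℂ y ((μ : ℂ) • Lz) : ℂ) = ((μ * ‖z‖ ^ 2 : ℝ) : ℂ) := by
    rw [inner_smul_right, hinner, inner_self_eq_norm_sq_to_K]
    push_cast
    rfl
  have hsq : ‖y - (μ : ℂ) • Lz‖ ^ 2 =
      ‖y‖ ^ 2 - 2 * (μ * ‖z‖ ^ 2) + μ ^ 2 * ‖Lz‖ ^ 2 := by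
    rw [norm_sub_sq (𝕜 := ℂ), e1]
    simp only [RCLike.re_to_complex, Complex.ofReal_re, norm_smul, Complex.norm_real,
      Real.norm_eq_abs, abs_of_pos hμ, mul_pow]
  have hu1 : ‖y‖ ≤ 3 * a * ‖x‖ :=
    (norm_toEuclideanLin_apply_le Ub x).trans
      (mul_le_mul_of_nonneg_right hU (norm_nonneg x))
  have hs1 : ‖Lz‖ ≤ 3 * a * ‖z‖ :=
    (norm_toEuclideanLin_apply_le Ub z).trans
      (mul_le_mul_of_nonneg_right hU (norm_nonneg z))
  have h2 : ‖y‖ ^ 2 ≤ ‖x‖ * ‖z‖ := by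
    have e2 : RCLike.re (inner ℂ y y : ℂ) = RCLike.re (inner ℂ x z : ℂ) := by
      rw [hzadj, LinearMap.adjoint_inner_right (Matrix.toEuclideanLin Ub) x y, ← hy]
    have e3 : ‖y‖ ^ 2 = RCLike.re (inner ℂ y y : ℂ) := (@inner_self_eq_norm_sq ℂ _ _ _ _ y).symm
    rw [e3, e2]
    exact re_inner_le_norm (𝕜 := ℂ) x z
  clear_value y z Lz
  clear happ hzadj hinner e1 hy hz hLz
  have hfin2 : ‖y - (μ : ℂ) • Lz‖ ^ 2 ≤ ((3 * a - 6 * μ * a ^ 3) * ‖x‖) ^ 2 := by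
    rw [hsq]
    have hkey := scalar_key a μ ‖y‖ ‖z‖ ‖x‖ ha hμ h27 (norm_nonneg x) (norm_nonneg y)
      (norm_nonneg z) hu1 h2
    have hLzb : μ ^ 2 * ‖Lz‖ ^ 2 ≤ μ ^ 2 * (3 * a * ‖z‖) ^ 2 := by
      have h0 := norm_nonneg Lz
      have h5 : ‖Lz‖ ^ 2 ≤ (3 * a * ‖z‖) ^ 2 := by
        nlinarith [mul_self_le_mul_self h0 hs1]
      exact mul_le_mul_of_nonneg_left h5 (sq_nonneg μ)
    linarith
  calc ‖y - (μ : ℂ) • Lz‖ = Real.sqrt (‖y - (μ : ℂ) • Lz‖ ^ 2) :=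
        (Real.sqrt_sq (norm_nonneg _)).symm
    _ ≤ Real.sqrt (((3 * a - 6 * μ * a ^ 3) * ‖x‖) ^ 2) := Real.sqrt_le_sqrt hfin2
    _ = (3 * a - 6 * μ * a ^ 3) * ‖x‖ :=
        Real.sqrt_sq (mul_nonneg hβ (norm_nonneg x))

lemma matOpNorm_nonneg {m n : ℕ} (M : Matrix (Fin m) (Fin n) ℂ) : 0 ≤ matOpNorm M :=
  norm_nonneg _

lemma smul_matOpNorm {μ : ℝ} (hμ : 0 < μ) {p q : ℕ} (M : Matrix (Fin p) (Fin q) ℂ) :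
    ‖(μ : ℂ) • M‖ = μ * ‖M‖ := by
  rw [norm_smul, Complex.norm_real, Real.norm_eq_abs, abs_of_pos hμ]

lemma slice_bound {n r R : ℕ} (μ a : ℝ) (hμ : 0 < μ) (ha : 0 < a) (h27 : μ * a ^ 2 ≤ 1 / 27)
    (Xb : Matrix (Fin n) (Fin r) ℂ) (Ub : Matrix (Fin n) (Fin R) ℂ)
    (Eb : Matrix (Fin n) (Fin n) ℂ)
    (hX : matOpNorm Xb ≤ a) (hU : matOpNorm Ub ≤ 3 * a) (hE : matOpNorm Eb ≤ a ^ 2) :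
    matOpNorm (Ub - (μ : ℂ) • (Ub * Ub.conjTranspose * Ub) +
      ((μ : ℂ) • (Xb * Xb.conjTranspose * Ub) + (μ : ℂ) • (Eb * Ub))) ≤ 3 * a := by
  rw [matOpNorm_eq] at *
  have hUn : (0:ℝ) ≤ ‖Ub‖ := norm_nonneg _
  have hXn : (0:ℝ) ≤ ‖Xb‖ := norm_nonneg _
  have hEn : (0:ℝ) ≤ ‖Eb‖ := norm_nonneg _
  have t1 : ‖Ub - (μ:ℂ) • (Ub * Ub.conjTranspose * Ub)‖ ≤ 3 * a - 6 * μ * a ^ 3 :=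
    key_norm μ a hμ ha h27 Ub hU
  have m1 : ‖Xb * Xb.conjTranspose * Ub‖ ≤ ‖Xb‖ * ‖Xb‖ * ‖Ub‖ := by
    calc ‖Xb * Xb.conjTranspose * Ub‖ ≤ ‖Xb * Xb.conjTranspose‖ * ‖Ub‖ :=
          Matrix.l2_opNorm_mul _ _
      _ ≤ ‖Xb‖ * ‖Xb.conjTranspose‖ * ‖Ub‖ :=
          mul_le_mul_of_nonneg_right (Matrix.l2_opNorm_mul _ _) hUn
      _ = ‖Xb‖ * ‖Xb‖ * ‖Ub‖ := by rw [Matrix.l2_opNorm_conjTranspose]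
  have m2 : ‖Eb * Ub‖ ≤ ‖Eb‖ * ‖Ub‖ := Matrix.l2_opNorm_mul _ _
  have t2 : ‖(μ:ℂ) • (Xb * Xb.conjTranspose * Ub)‖ ≤ μ * (a * a * (3 * a)) := by
    rw [smul_matOpNorm hμ]
    have hx2 : ‖Xb‖ * ‖Xb‖ ≤ a * a := mul_le_mul hX hX hXn ha.le
    have : ‖Xb‖ * ‖Xb‖ * ‖Ub‖ ≤ a * a * (3 * a) :=
      mul_le_mul hx2 hU hUn (by positivity)
    nlinarith [norm_nonneg (Xb * Xb.conjTranspose * Ub)]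
  have t3 : ‖(μ:ℂ) • (Eb * Ub)‖ ≤ μ * (a ^ 2 * (3 * a)) := by
    rw [smul_matOpNorm hμ]
    have : ‖Eb‖ * ‖Ub‖ ≤ a ^ 2 * (3 * a) :=
      mul_le_mul hE hU hUn (by positivity)
    nlinarith [norm_nonneg (Eb * Ub)]
  calc ‖Ub - (μ : ℂ) • (Ub * Ub.conjTranspose * Ub) +
        ((μ : ℂ) • (Xb * Xb.conjTranspose * Ub) + (μ : ℂ) • (Eb * Ub))‖
      ≤ ‖Ub - (μ : ℂ) • (Ub * Ub.conjTranspose * Ub)‖ +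
        ‖(μ : ℂ) • (Xb * Xb.conjTranspose * Ub) + (μ : ℂ) • (Eb * Ub)‖ := norm_add_le _ _
    _ ≤ ‖Ub - (μ : ℂ) • (Ub * Ub.conjTranspose * Ub)‖ +
        (‖(μ : ℂ) • (Xb * Xb.conjTranspose * Ub)‖ + ‖(μ : ℂ) • (Eb * Ub)‖) := by
        have := norm_add_le ((μ : ℂ) • (Xb * Xb.conjTranspose * Ub)) ((μ : ℂ) • (Eb * Ub))
        linarith
    _ ≤ 3 * a := by nlinarith

end Aux

/-- If `‖U_t‖ ≤ 3‖X‖`, `μ ≤ (1/27)·‖X‖⁻²`, and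
`‖(𝒜*𝒜 − ℐ)(X*Xᵀ − U_t*U_tᵀ)‖ ≤ ‖X‖²`, then `‖U_{t+1}‖ ≤ 3‖X‖`. -/
theorem statement15 {n r R k m : ℕ} (A : Fin m → Tensor n n k)
    (hAsym : ∀ i, ttr (A i) = A i)
    (X : Tensor n r k) (hr : r ≤ n) (hrank : trank X = r)
    (μ : ℝ) (hμ0 : 0 < μ) (U : Tensor n R k)
    (hU : specNorm U ≤ 3 * specNorm X)
    (hμ : μ ≤ (1 / 27) * (specNorm X ^ 2)⁻¹)
    (hdev : specNorm
      (AtA A (tprod X (ttr X) - tprod U (ttr U)) - (tprod X (ttr X) - tprod U (ttr U)))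
        ≤ specNorm X ^ 2) :
    specNorm (gdStep A X μ U) ≤ 3 * specNorm X := by
  classical
  have haX : 0 ≤ specNorm X := Real.iSup_nonneg fun j => matOpNorm_nonneg _
  have hapos : 0 < specNorm X := by
    rcases haX.lt_or_eq with h | h
    · exact h
    · exfalso
      rw [← h] at hμ
      simp at hμ
      linarith
  have h27 : μ * specNorm X ^ 2 ≤ 1 / 27 := by
    have h := mul_le_mul_of_nonneg_right hμ (sq_nonneg (specNorm X))
    rw [mul_assoc, inv_mul_cancel₀ (pow_ne_zero 2 hapos.ne'), mul_one] at h
    linarith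
  haveI : Nonempty (Fin k) := by
    by_contra hne
    haveI := not_nonempty_iff.mp hne
    have h0 : specNorm X = 0 := Real.iSup_of_isEmpty _
    rw [h0] at hapos
    exact lt_irrefl _ hapos
  show (⨆ j : Fin k, matOpNorm (slice (gdStep A X μ U) j)) ≤ 3 * specNorm X
  apply ciSup_le
  intro j
  set D : Tensor n n k := tprod X (ttr X) - tprod U (ttr U) with hD
  have hDslice : slice D j =
      slice X j * (slice X j).conjTranspose - slice U j * (slice U j).conjTranspose := by
    rw [hD, slice_sub, slice_tprod, slice_tprod, slice_ttr, slice_ttr]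
  have hAtA : slice (AtA A D) j =
      (slice X j * (slice X j).conjTranspose - slice U j * (slice U j).conjTranspose) +
        slice (AtA A D - D) j := by
    rw [slice_sub, ← hDslice]
    abel
  have hgd : slice (gdStep A X μ U) j =
      slice U j - (μ : ℂ) • (slice U j * (slice U j).conjTranspose * slice U j) +
        ((μ : ℂ) • (slice X j * (slice X j).conjTranspose * slice U j) +
          (μ : ℂ) • (slice (AtA A D - D) j * slice U j)) := by
    show slice (tprod (tId n k + μ • AtA A D) U) j = _
    rw [slice_tprod, slice_add, slice_tId, slice_smul, hAtA]
    simp only [Matrix.add_mul, Matrix.sub_mul, Matrix.one_mul, Matrix.smul_mul, smul_sub,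
      smul_add, Matrix.mul_assoc]
    abel
  have hXb : matOpNorm (slice X j) ≤ specNorm X :=
    le_ciSup (f := fun j : Fin k => matOpNorm (slice X j))
      (Set.Finite.bddAbove (Set.finite_range _)) j
  have hUb : matOpNorm (slice U j) ≤ 3 * specNorm X :=
    le_trans (le_ciSup (f := fun j : Fin k => matOpNorm (slice U j))
      (Set.Finite.bddAbove (Set.finite_range _)) j) hU
  have hEb : matOpNorm (slice (AtA A D - D) j) ≤ specNorm X ^ 2 :=
    le_trans (le_ciSup (f := fun j : Fin k => matOpNorm (slice (AtA A D - D) j))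
      (Set.Finite.bddAbove (Set.finite_range _)) j) hdev
  rw [hgd]
  exact slice_bound μ (specNorm X) hμ0 hapos h27 _ _ _ hXb hUb hEb

end Tubal
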